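/- Let k be a positive integer and let G be a graph containing an induced subgraph B such that B is (isomorphic to, with V(H) identified with the corresponding subset of V(B)) the k-subdivision Sub_k(H) of some connected simple graph H that contains a cycle, and such that every component K of G − V(H) that contains a vertex from V(B) ∖ V(H) satisfies ν_k(K) = 0. Then ν_k(G) = ν_k(G − V(H)) + |V(H)| and τ_k(G) = τ_k(G − V(H)) + |V(H)|. -/

import Mathlib

open SimpleGraph

/-- `S` is the vertex set of a (not necessarily induced) path of order `k` in `G`,
i.e. a `k`-path of `G`. -/
def IsPathSupport {V : Type*} (k : ℕ) (G : SimpleGraph V) (S : Set V) : Prop :=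
  ∃ (u v : V) (p : G.Walk u v), p.IsPath ∧ p.support.length = k ∧ S = {x | x ∈ p.support}

/-- `X` is a `k`-vertex cover of `G`: every `k`-path of `G` contains a vertex of `X`. -/
def IsKVertexCover {V : Type*} (k : ℕ) (G : SimpleGraph V) (X : Finset V) : Prop :=
  ∀ S : Set V, IsPathSupport k G S → ∃ x ∈ X, x ∈ S

/-- The `k`-matching number `ν_k(G)`: the maximum number of pairwise disjoint
`k`-paths of `G`. -/
noncomputable def nuK {V : Type*} (k : ℕ) (G : SimpleGraph V) : ℕ :=
  sSup {n | ∃ M : Finset (Set V), (∀ S ∈ M, IsPathSupport k G S) ∧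
    (↑M : Set (Set V)).Pairwise Disjoint ∧ M.card = n}

/-- The `k`-vertex cover number `τ_k(G)`: the minimum cardinality of a `k`-vertex cover. -/
noncomputable def tauK {V : Type*} (k : ℕ) (G : SimpleGraph V) : ℕ :=
  sInf {n | ∃ X : Finset V, IsKVertexCover k G X ∧ X.card = n}

/-- `G` belongs to the class `𝒢_k`: `ν_k(H) = τ_k(H)` for every induced subgraph `H` of `G`. -/
def memGclass {V : Type*} (k : ℕ) (G : SimpleGraph V) : Prop :=
  ∀ s : Set V, nuK k (G.induce s) = tauK k (G.induce s)

/-- `G` is the `k`-subdivision `Sub_k(H)` of `H`, with the vertices of `H` embedded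
via the injection `f`: every edge `uv` of `H` is replaced by a path
`f u = g d 0, g d 1, …, g d k = f v` (where `d` is a dart of `H` representing `uv`)
whose `k-1` internal vertices are new vertices, and `G` has no other vertices
or edges. -/
def IsKSubdivisionWith {W V : Type*} (k : ℕ) (H : SimpleGraph W) (G : SimpleGraph V)
    (f : W → V) : Prop :=
  ∃ g : H.Dart → ℕ → V,
    Function.Injective f ∧
    (∀ d : H.Dart, g d 0 = f d.fst ∧ g d k = f d.snd) ∧
    (∀ (d : H.Dart) (i : ℕ), i ≤ k → g d.symm i = g d (k - i)) ∧
    (∀ (d : H.Dart) (i : ℕ), 0 < i → i < k → g d i ∉ Set.range f) ∧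
    (∀ (d d' : H.Dart) (i i' : ℕ), 0 < i → i < k → 0 < i' → i' < k →
      g d i = g d' i' → (d = d' ∧ i = i') ∨ (d = d'.symm ∧ i = k - i')) ∧
    (∀ x y : V, G.Adj x y ↔ ∃ (d : H.Dart) (i : ℕ), i < k ∧ x = g d i ∧ y = g d (i + 1)) ∧
    (∀ x : V, (∃ w, f w = x) ∨ ∃ (d : H.Dart) (i : ℕ), 0 < i ∧ i < k ∧ g d i = x)

/-- `G` is (isomorphic to) the `k`-subdivision `Sub_k(H)` of `H`. -/
def IsKSubdivision {W V : Type*} (k : ℕ) (H : SimpleGraph W) (G : SimpleGraph V) : Prop :=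
  ∃ f : W → V, IsKSubdivisionWith k H G f

-- ## Walk transfer lemmas

lemma exists_walk_induce {V : Type*} {G : SimpleGraph V} {s : Set V} :
    ∀ {u v : V} (p : G.Walk u v), (∀ x ∈ p.support, x ∈ s) → ∀ (hu : u ∈ s) (hv : v ∈ s),
    ∃ q : (G.induce s).Walk ⟨u, hu⟩ ⟨v, hv⟩, q.support.map Subtype.val = p.support := by
  intro u v p
  induction p with
  | nil => intro hp hu hv; exact ⟨Walk.nil, by simp⟩
  | @cons u x v h p ih =>
    intro hp hu hv
    have hm : ∀ y ∈ p.support, y ∈ s := fun y hy => hp y (by simp [hy])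
    have hx : x ∈ s := hm _ p.start_mem_support
    obtain ⟨q, hq⟩ := ih hm hx hv
    refine ⟨Walk.cons (show (G.induce s).Adj ⟨u, hu⟩ ⟨x, hx⟩ from h) q, ?_⟩
    simp only [Walk.support_cons, List.map_cons, hq]

lemma isPathSupport_of_subset {V : Type*} {G : SimpleGraph V} {s : Set V} {k : ℕ} {S : Set V}
    (h : IsPathSupport k G S) (hS : S ⊆ s) :
    ∃ T : Set ↥s, Subtype.val '' T = S ∧ IsPathSupport k (G.induce s) T := by
  obtain ⟨u, v, p, hp, hlen, rfl⟩ := h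
  have hsupp : ∀ x ∈ p.support, x ∈ s := fun x hx => hS hx
  obtain ⟨q, hq⟩ := exists_walk_induce p hsupp (hsupp _ p.start_mem_support)
    (hsupp _ p.end_mem_support)
  refine ⟨{x | x ∈ q.support}, ?_, _, _, q, ?_, ?_, rfl⟩
  · rw [← hq]; ext x
    constructor
    · rintro ⟨y, hy, rfl⟩; exact List.mem_map_of_mem hy
    · intro hx
      rcases List.mem_map.mp hx with ⟨y, hy, rfl⟩
      exact ⟨y, hy, rfl⟩
  · rw [Walk.isPath_def]
    have hnd := hp.support_nodup
    rw [← hq] at hnd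
    exact hnd.of_map _
  · rw [← hlen, ← hq, List.length_map]

lemma isPathSupport_image {V : Type*} {G : SimpleGraph V} {s : Set V} {k : ℕ} {T : Set ↥s}
    (h : IsPathSupport k (G.induce s) T) :
    IsPathSupport k G (Subtype.val '' T) := by
  obtain ⟨u, v, p, hp, hlen, rfl⟩ := h
  refine ⟨_, _, p.map (Embedding.induce (G := G) s).toHom, ?_, ?_, ?_⟩
  · exact Walk.map_isPath_of_injective (Embedding.induce (G := G) s).injective hp
  · rw [Walk.support_map, List.length_map, hlen]
  · ext x
    simp only [Set.mem_image, Set.mem_setOf_eq, Walk.support_map, List.mem_map]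
    constructor
    · rintro ⟨y, hy, rfl⟩; exact ⟨y, hy, rfl⟩
    · rintro ⟨y, hy, rfl⟩; exact ⟨y, hy, rfl⟩

-- ## nuK / tauK API

section API
variable {V : Type*} [Fintype V] {k : ℕ} {G : SimpleGraph V}

lemma pathSupport_nonempty {S : Set V} (hk : 0 < k) (h : IsPathSupport k G S) : S.Nonempty := by
  obtain ⟨u, v, p, hp, hlen, rfl⟩ := h
  exact ⟨u, p.start_mem_support⟩

lemma matching_card_le (hk : 0 < k) (M : Finset (Set V))
    (h1 : ∀ S ∈ M, IsPathSupport k G S) (h2 : (↑M : Set (Set V)).Pairwise Disjoint) :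
    M.card ≤ Fintype.card V := by
  classical
  have hne : ∀ S ∈ M, S.Nonempty := fun S hS => pathSupport_nonempty hk (h1 S hS)
  choose rep hrep using hne
  -- map each set to its representative, injective by disjointness
  rw [← Finset.card_attach (s := M)]
  have : Function.Injective (fun S : {x // x ∈ M} => rep S S.2) := by
    rintro ⟨S, hS⟩ ⟨S', hS'⟩ hEq
    simp only at hEq
    ext1
    by_contra hSS'
    have := h2 (Finset.mem_coe.mpr hS) (Finset.mem_coe.mpr hS') hSS'
    exact (Set.disjoint_left.mp this (hrep S hS)) (hEq ▸ hrep S' hS')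
  calc M.attach.card ≤ Finset.univ.card := Finset.card_le_card (Finset.subset_univ _)
    _ = Fintype.card {x // x ∈ M} := rfl
    _ ≤ Fintype.card V := Fintype.card_le_of_injective _ this

lemma nuK_bddAbove (hk : 0 < k) : BddAbove {n | ∃ M : Finset (Set V),
    (∀ S ∈ M, IsPathSupport k G S) ∧ (↑M : Set (Set V)).Pairwise Disjoint ∧ M.card = n} := by
  refine ⟨Fintype.card V, ?_⟩
  rintro n ⟨M, h1, h2, rfl⟩
  exact matching_card_le hk M h1 h2

lemma le_nuK (hk : 0 < k) (M : Finset (Set V))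
    (h1 : ∀ S ∈ M, IsPathSupport k G S) (h2 : (↑M : Set (Set V)).Pairwise Disjoint) :
    M.card ≤ nuK k G :=
  le_csSup (nuK_bddAbove hk) ⟨M, h1, h2, rfl⟩

lemma nuK_le (n : ℕ) (h : ∀ M : Finset (Set V), (∀ S ∈ M, IsPathSupport k G S) →
    (↑M : Set (Set V)).Pairwise Disjoint → M.card ≤ n) :
    nuK k G ≤ n := by
  have hne : ({n | ∃ M : Finset (Set V), (∀ S ∈ M, IsPathSupport k G S) ∧
      (↑M : Set (Set V)).Pairwise Disjoint ∧ M.card = n} : Set ℕ).Nonempty :=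
    ⟨0, ∅, by simp, by simp, by simp⟩
  apply csSup_le hne
  rintro m ⟨M, h1, h2, rfl⟩
  exact h M h1 h2

lemma exists_max_matching (hk : 0 < k) : ∃ M : Finset (Set V),
    (∀ S ∈ M, IsPathSupport k G S) ∧ (↑M : Set (Set V)).Pairwise Disjoint ∧
    M.card = nuK k G := by
  have hne : ({n | ∃ M : Finset (Set V), (∀ S ∈ M, IsPathSupport k G S) ∧
      (↑M : Set (Set V)).Pairwise Disjoint ∧ M.card = n} : Set ℕ).Nonempty :=
    ⟨0, ∅, by simp, by simp, by simp⟩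
  exact Nat.sSup_mem hne (nuK_bddAbove hk)

lemma one_le_nuK (hk : 0 < k) {S : Set V} (h : IsPathSupport k G S) : 1 ≤ nuK k G := by
  have := le_nuK hk {S} (by simpa using h) (by simp)
  simpa using this

lemma tauK_le (X : Finset V) (h : IsKVertexCover k G X) : tauK k G ≤ X.card :=
  Nat.sInf_le ⟨X, h, rfl⟩

lemma exists_min_cover (hk : 0 < k) : ∃ X : Finset V, IsKVertexCover k G X ∧
    X.card = tauK k G := by
  have hne : {n | ∃ X : Finset V, IsKVertexCover k G X ∧ X.card = n}.Nonempty := by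
    refine ⟨(Finset.univ : Finset V).card, Finset.univ, ?_, rfl⟩
    intro S hS
    obtain ⟨x, hx⟩ := pathSupport_nonempty hk hS
    exact ⟨x, Finset.mem_univ x, hx⟩
  exact Nat.sInf_mem hne

end API

-- ## Orientation lemma

lemma walk_exists_dart_fst {V : Type*} {G : SimpleGraph V} :
    ∀ {u v x : V} (p : G.Walk u v), x ∈ p.support → x = v ∨ ∃ d ∈ p.darts, d.fst = x := by
  intro u v x p
  induction p with
  | nil => intro hx; left; simpa using hx
  | @cons a b c h p ih =>
    intro hx
    rcases List.mem_cons.mp (by simpa [Walk.support_cons] using hx) with rfl | hx'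
    · exact Or.inr ⟨⟨(x, b), h⟩, by simp, rfl⟩
    · rcases ih hx' with rfl | ⟨d, hd, hdx⟩
      · exact Or.inl rfl
      · exact Or.inr ⟨d, by simp [hd], hdx⟩

lemma closed_walk_exists_dart {V : Type*} {G : SimpleGraph V} {w x : V} (c : G.Walk w w)
    (hnil : c ≠ Walk.nil) (hx : x ∈ c.support) : ∃ d ∈ c.darts, d.fst = x := by
  rcases walk_exists_dart_fst c hx with rfl | h
  · cases c with
    | nil => exact absurd rfl hnil
    | @cons a b c h p => exact ⟨⟨(_, b), h⟩, by simp, rfl⟩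
  · exact h

lemma exists_orientation {W : Type*} {H : SimpleGraph W} (hconn : H.Connected)
    {w : W} {c : H.Walk w w} (hc : c.IsCycle) :
    ∃ D : W → H.Dart, (∀ v, (D v).fst = v) ∧
      ∀ v v', (D v).edge = (D v').edge → v = v' := by
  classical
  have hchoice : ∀ v : W, ∃ d : H.Dart, d.fst = v ∧
      ((v ∈ c.support ∧ d ∈ c.darts) ∨
        (v ∉ c.support ∧ H.dist d.snd w < H.dist v w)) := by
    intro v
    by_cases hv : v ∈ c.support
    · obtain ⟨d, hd, hdx⟩ := closed_walk_exists_dart c hc.ne_nil hv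
      exact ⟨d, hdx, Or.inl ⟨hv, hd⟩⟩
    · have hvw : v ≠ w := fun h => hv (h ▸ c.start_mem_support)
      have hpos : 0 < H.dist v w := hconn.pos_dist_of_ne hvw
      obtain ⟨p, hp⟩ := (hconn v w).exists_walk_length_eq_dist
      cases p with
      | nil => simp [← hp] at hpos
      | @cons a b c' h q =>
        refine ⟨⟨(v, b), h⟩, rfl, Or.inr ⟨hv, ?_⟩⟩
        have h1 : H.dist b w ≤ q.length := SimpleGraph.dist_le q
        have h2 : q.length + 1 = H.dist v w := by simpa [Walk.length_cons] using hp
        show H.dist b w < H.dist v w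
        omega
  choose D hfst hprop using hchoice
  refine ⟨D, hfst, ?_⟩
  intro v v' hEq
  have hedge : ∀ (d : H.Dart), d.edge = s(d.fst, d.snd) := by
    rintro ⟨⟨a, b⟩, hab⟩; rfl
  rcases hprop v with ⟨hv, hdv⟩ | ⟨hv, hdv⟩ <;> rcases hprop v' with ⟨hv', hdv'⟩ | ⟨hv', hdv'⟩
  · -- both on cycle
    have hnodup : c.edges.Nodup := hc.isCircuit.isTrail.edges_nodup
    have hmapeq : c.edges = c.darts.map SimpleGraph.Dart.edge := rfl
    rw [hmapeq] at hnodup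
    have : D v = D v' := List.inj_on_of_nodup_map hnodup hdv hdv' hEq
    rw [← hfst v, ← hfst v', this]
  · -- v on cycle, v' not
    exfalso
    rw [hedge, hedge, hfst v, hfst v'] at hEq
    have hsndmem : (D v).toProd.2 ∈ c.support :=
      Walk.dart_snd_mem_support_of_mem_darts c hdv
    rcases Sym2.eq_iff.mp hEq with ⟨h1, _⟩ | ⟨_, h2⟩
    · exact hv' (h1 ▸ hv)
    · exact hv' (by rw [← h2]; exact hsndmem)
  · -- v' on cycle, v not
    exfalso
    rw [hedge, hedge, hfst v, hfst v'] at hEq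
    have hsndmem : (D v').toProd.2 ∈ c.support :=
      Walk.dart_snd_mem_support_of_mem_darts c hdv'
    rcases Sym2.eq_iff.mp hEq with ⟨h1, _⟩ | ⟨h1, _⟩
    · exact hv (h1.symm ▸ hv')
    · exact hv (by rw [h1]; exact hsndmem)
  · -- both off cycle
    rw [hedge, hedge, hfst v, hfst v'] at hEq
    rcases Sym2.eq_iff.mp hEq with ⟨h1, _⟩ | ⟨h1, h2⟩
    · exact h1
    · exfalso
      have a1 : H.dist v w < H.dist v' w := by rw [h1]; exact hdv'
      have a2 : H.dist v' w < H.dist v w := by rw [← h2]; exact hdv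
      omega

-- ## Subdivision paths

lemma subdiv_walk {V W : Type*} {B : SimpleGraph V} {H : SimpleGraph W} {k : ℕ}
    (g : H.Dart → ℕ → V)
    (hadj : ∀ (d : H.Dart) (i : ℕ), i < k → B.Adj (g d i) (g d (i + 1)))
    (d : H.Dart) : ∀ n, n < k → ∃ p : B.Walk (g d 0) (g d n),
      p.support = (List.range (n + 1)).map (g d) := by
  intro n
  induction n with
  | zero => intro _; exact ⟨Walk.nil, by simp [List.range_succ]⟩
  | succ n ih =>
    intro hn
    obtain ⟨p, hp⟩ := ih (by omega)
    refine ⟨p.concat (hadj d n (by omega)), ?_⟩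
    rw [Walk.support_concat, hp]
    simp [List.range_succ, List.concat_eq_append]

lemma subdiv_path_inj {V W : Type*} {k : ℕ} (hk : 0 < k)
    {VB : Set V} {H : SimpleGraph W} {f : W → ↥VB} {g : H.Dart → ℕ → ↥VB}
    (hg0 : ∀ d : H.Dart, g d 0 = f d.fst ∧ g d k = f d.snd)
    (hint : ∀ (d : H.Dart) (i : ℕ), 0 < i → i < k → g d i ∉ Set.range f)
    (hinj : ∀ (d d' : H.Dart) (i i' : ℕ), 0 < i → i < k → 0 < i' → i' < k →
      g d i = g d' i' → (d = d' ∧ i = i') ∨ (d = d'.symm ∧ i = k - i'))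
    (d : H.Dart) {i j : ℕ} (hi : i < k) (hj : j < k) (hgij : g d i = g d j) : i = j := by
  have hdsymm : d ≠ d.symm := by
    intro h
    have : d.toProd.1 = d.toProd.2 := by
      conv_lhs => rw [h]
      rfl
    exact H.ne_of_adj d.adj this
  rcases Nat.eq_zero_or_pos i with rfl | hi0
  · rcases Nat.eq_zero_or_pos j with rfl | hj0
    · rfl
    · exfalso
      refine hint d j hj0 hj ?_
      rw [← hgij, (hg0 d).1]; exact ⟨d.fst, rfl⟩
  · rcases Nat.eq_zero_or_pos j with rfl | hj0
    · exfalso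
      refine hint d i hi0 hi ?_
      rw [hgij, (hg0 d).1]; exact ⟨d.fst, rfl⟩
    · rcases hinj d d i j hi0 hi hj0 hj hgij with ⟨_, h⟩ | ⟨h, _⟩
      · exact h
      · exact absurd h hdsymm

lemma subdiv_pathSupport {V W : Type*} {k : ℕ} (hk : 0 < k) {G : SimpleGraph V}
    {VB : Set V} {H : SimpleGraph W} {f : W → ↥VB} {g : H.Dart → ℕ → ↥VB}
    (hg0 : ∀ d : H.Dart, g d 0 = f d.fst ∧ g d k = f d.snd)
    (hint : ∀ (d : H.Dart) (i : ℕ), 0 < i → i < k → g d i ∉ Set.range f)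
    (hinj : ∀ (d d' : H.Dart) (i i' : ℕ), 0 < i → i < k → 0 < i' → i' < k →
      g d i = g d' i' → (d = d' ∧ i = i') ∨ (d = d'.symm ∧ i = k - i'))
    (hadj : ∀ (d : H.Dart) (i : ℕ), i < k → (G.induce VB).Adj (g d i) (g d (i + 1)))
    (d : H.Dart) :
    IsPathSupport k G {x | ∃ i < k, (↑(g d i) : V) = x} := by
  obtain ⟨p, hp⟩ := subdiv_walk g hadj d (k - 1) (by omega)
  have hk1 : k - 1 + 1 = k := by omega
  rw [hk1] at hp
  refine ⟨_, _, p.map (Embedding.induce (G := G) VB).toHom,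
    Walk.map_isPath_of_injective (Embedding.induce (G := G) VB).injective ?_, ?_, ?_⟩
  · rw [Walk.isPath_def, hp]
    refine List.Nodup.map_on ?_ (List.nodup_range (n := k))
    intro i hi j hj hgij
    exact subdiv_path_inj hk hg0 hint hinj d (by simpa using hi) (by simpa using hj) hgij
  · rw [Walk.support_map, hp, List.length_map, List.length_map, List.length_range]
  · ext x
    simp only [Set.mem_setOf_eq, Walk.support_map, hp, List.map_map, List.mem_map,
      List.mem_range]
    constructor
    · rintro ⟨i, hi, rfl⟩; exact ⟨i, hi, rfl⟩
    · rintro ⟨i, hi, rfl⟩; exact ⟨i, hi, rfl⟩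


set_option maxHeartbeats 1000000 in
/-- If `G` contains an induced subgraph `B` (induced on the vertex set `VB`) which is
the `k`-subdivision of a connected graph `H` (on the vertex set `VH ⊆ VB`, embedded
by inclusion) containing a cycle, and every component of `G - VH` containing a vertex
of `VB \ VH` has `k`-matching number `0`, then
`ν_k(G) = ν_k(G - VH) + |VH|` and `τ_k(G) = τ_k(G - VH) + |VH|`. -/
theorem stmt10 {V : Type*} [Fintype V] (k : ℕ) (hk : 0 < k) (G : SimpleGraph V)
    (VH VB : Set V) (hVHB : VH ⊆ VB) (H : SimpleGraph ↥VH)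
    (hB : IsKSubdivisionWith k H (G.induce VB) (Set.inclusion hVHB))
    (hconn : H.Connected)
    (hcyc : ∃ (w : ↥VH) (c : H.Walk w w), c.IsCycle)
    (hcomp : ∀ x : ↥(VHᶜ), (x : V) ∈ VB \ VH →
      nuK k ((G.induce VHᶜ).induce ((G.induce VHᶜ).connectedComponentMk x).supp) = 0) :
    nuK k G = nuK k (G.induce VHᶜ) + VH.ncard ∧
      tauK k G = tauK k (G.induce VHᶜ) + VH.ncard := by
  classical
  obtain ⟨g, hf, hg0, hsymm, hint, hinj, hadj, hsurj⟩ := hB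
  set f := Set.inclusion hVHB with hfdef
  set G' := G.induce VHᶜ with hG'def
  haveI : Fintype ↥VH := Fintype.ofFinite _
  haveI : Fintype ↥(VHᶜ) := Fintype.ofFinite _
  obtain ⟨w, c, hc⟩ := hcyc
  obtain ⟨D, hDfst, hDinj⟩ := exists_orientation hconn hc
  -- basic facts about g
  have hBadj : ∀ (d : H.Dart) (i : ℕ), i < k → (G.induce VB).Adj (g d i) (g d (i + 1)) :=
    fun d i hi => (hadj _ _).mpr ⟨d, i, hi, rfl, rfl⟩
  have hgVH : ∀ (d : H.Dart) (i : ℕ), 0 < i → i < k → (↑(g d i) : V) ∉ VH := by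
    intro d i h0 hik hmem
    refine hint d i h0 hik ⟨⟨↑(g d i), hmem⟩, ?_⟩
    apply Subtype.ext
    rfl
  have hg0v : ∀ v : ↥VH, (↑(g (D v) 0) : V) = ↑v := by
    intro v
    rw [(hg0 (D v)).1, hDfst v]
  -- the k-paths through VH
  set P : ↥VH → Set V := fun v => {x | ∃ i < k, (↑(g (D v) i) : V) = x} with hPdef
  have hPsupp : ∀ v : ↥VH, IsPathSupport k G (P v) :=
    fun v => subdiv_pathSupport hk hg0 hint hinj hBadj (D v)
  have hPself : ∀ v : ↥VH, (↑v : V) ∈ P v := fun v => ⟨0, hk, hg0v v⟩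
  have hPmem : ∀ (v : ↥VH) (x : V), x ∈ P v → x = ↑v ∨ x ∈ VB \ VH := by
    rintro v x ⟨i, hi, rfl⟩
    rcases Nat.eq_zero_or_pos i with rfl | hi0
    · exact Or.inl (hg0v v)
    · exact Or.inr ⟨(g (D v) i).2, hgVH (D v) i hi0 hi⟩
  have hPdisj : ∀ v v' : ↥VH, v ≠ v' → Disjoint (P v) (P v') := by
    intro v v' hvv'
    rw [Set.disjoint_left]
    rintro x ⟨i, hi, rfl⟩ ⟨i', hi', hx'⟩
    have hgg : g (D v) i = g (D v') i' := Subtype.coe_injective hx'.symm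
    rcases Nat.eq_zero_or_pos i with rfl | hi0
    · rcases Nat.eq_zero_or_pos i' with rfl | hi0'
      · refine hvv' (Subtype.ext ?_)
        rw [← hg0v v, ← hg0v v', hgg]
      · refine hint (D v') i' hi0' hi' ⟨(D v).fst, ?_⟩
        rw [← hgg, (hg0 (D v)).1]
    · rcases Nat.eq_zero_or_pos i' with rfl | hi0'
      · refine hint (D v) i hi0 hi ⟨(D v').fst, ?_⟩
        rw [hgg, (hg0 (D v')).1]
      · rcases hinj (D v) (D v') i i' hi0 hi hi0' hi' hgg with ⟨hd, _⟩ | ⟨hd, _⟩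
        · exact hvv' (hDinj v v' (by rw [hd]))
        · refine hvv' (hDinj v v' ?_)
          rw [hd, Dart.edge_symm]
  -- paths of G' avoid VB \ VH
  have hNoB : ∀ T : Set ↥(VHᶜ), IsPathSupport k G' T → ∀ y ∈ T, (↑y : V) ∉ VB \ VH := by
    intro T hT y hyT hyB
    obtain ⟨u, v, p, hp, hlen, hTdef⟩ := hT
    rw [hTdef] at hyT
    have hreach : ∀ z ∈ p.support, G'.Reachable z y := by
      intro z hz
      exact (Walk.reachable (p.takeUntil z hz)).symm.trans (Walk.reachable (p.takeUntil y hyT))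
    have hsub : {x | x ∈ p.support} ⊆ (G'.connectedComponentMk y).supp := by
      intro z hz
      rw [ConnectedComponent.mem_supp_iff]
      exact ConnectedComponent.sound (hreach z hz)
    obtain ⟨T', _, hT'⟩ := isPathSupport_of_subset ⟨u, v, p, hp, hlen, rfl⟩ hsub
    haveI : Fintype ↥((G'.connectedComponentMk y).supp) := Fintype.ofFinite _
    have h1 := one_le_nuK hk hT'
    have h0 := hcomp y hyB
    rw [h0] at h1
    exact absurd h1 (by omega)
  have hcard : (Finset.univ : Finset ↥VH).card = VH.ncard := by
    rw [Set.ncard_eq_toFinset_card', Set.toFinset_card]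
    rfl
  have hnu_ge : nuK k G' + VH.ncard ≤ nuK k G := by
    obtain ⟨M₀, hM₀1, hM₀2, hM₀card⟩ := exists_max_matching (G := G') hk
    set M₁ : Finset (Set V) := M₀.image (fun T => Subtype.val '' T) with hM₁def
    set M₂ : Finset (Set V) := (Finset.univ : Finset ↥VH).image P with hM₂def
    have hM₁sub : ∀ S ∈ M₁, ∃ T ∈ M₀, Subtype.val '' T = S := by
      intro S hS
      obtain ⟨T, hT, hTS⟩ := Finset.mem_image.mp hS
      exact ⟨T, hT, hTS⟩
    have hM₁nh : ∀ S ∈ M₁, ∀ x ∈ S, x ∉ VH ∧ x ∉ VB \ VH := by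
      intro S hS x hx
      obtain ⟨T, hT, rfl⟩ := hM₁sub S hS
      obtain ⟨y, hy, rfl⟩ := hx
      exact ⟨y.2, hNoB T (hM₀1 T hT) y hy⟩
    have hdisjoint12 : Disjoint M₁ M₂ := by
      rw [Finset.disjoint_left]
      intro S hS1 hS2
      obtain ⟨v, _, rfl⟩ := Finset.mem_image.mp hS2
      exact (hM₁nh _ hS1 _ (hPself v)).1 v.2
    have hcard1 : M₁.card = nuK k G' := by
      rw [hM₁def, Finset.card_image_of_injective _
        (Set.image_injective.mpr Subtype.coe_injective), hM₀card]
    have hcard2 : M₂.card = VH.ncard := by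
      rw [hM₂def, Finset.card_image_of_injective _ ?_, hcard]
      intro v v' hvv'
      by_contra hne
      exact Set.disjoint_left.mp (hPdisj v v' hne) (hPself v) (hvv' ▸ hPself v)
    have hvalid : ∀ S ∈ M₁ ∪ M₂, IsPathSupport k G S := by
      intro S hS
      rcases Finset.mem_union.mp hS with hS | hS
      · obtain ⟨T, hT, rfl⟩ := hM₁sub S hS
        exact isPathSupport_image (hM₀1 T hT)
      · obtain ⟨v, _, rfl⟩ := Finset.mem_image.mp hS
        exact hPsupp v
    have hpw : (↑(M₁ ∪ M₂) : Set (Set V)).Pairwise Disjoint := by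
      intro S hS S' hS' hne
      simp only [Finset.coe_union, Set.mem_union, Finset.mem_coe] at hS hS'
      have cross : ∀ A B : Set V, A ∈ M₁ → B ∈ M₂ → Disjoint A B := by
        intro A B hA hB
        obtain ⟨v, _, rfl⟩ := Finset.mem_image.mp hB
        rw [Set.disjoint_left]
        intro x hxA hxP
        rcases hPmem v x hxP with rfl | hxB
        · exact (hM₁nh _ hA _ hxA).1 v.2
        · exact (hM₁nh _ hA _ hxA).2 hxB
      rcases hS with hS | hS <;> rcases hS' with hS' | hS'
      · obtain ⟨T, hT, rfl⟩ := hM₁sub S hS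
        obtain ⟨T', hT', rfl⟩ := hM₁sub S' hS'
        have hTT' : T ≠ T' := fun h => hne (by rw [h])
        have hdj := hM₀2 (Finset.mem_coe.mpr hT) (Finset.mem_coe.mpr hT') hTT'
        rw [Set.disjoint_left]
        rintro x ⟨y, hy, rfl⟩ ⟨y', hy', hyy'⟩
        have heq : y' = y := Subtype.coe_injective hyy'
        rw [heq] at hy'
        exact Set.disjoint_left.mp hdj hy hy'
      · exact cross S S' hS hS'
      · exact (cross S' S hS' hS).symm
      · obtain ⟨v, _, rfl⟩ := Finset.mem_image.mp hS
        obtain ⟨v', _, rfl⟩ := Finset.mem_image.mp hS'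
        exact hPdisj v v' (fun h => hne (by rw [h]))
    have := le_nuK hk (M₁ ∪ M₂) hvalid hpw
    rwa [Finset.card_union_of_disjoint hdisjoint12, hcard1, hcard2] at this
  have hnu_le : nuK k G ≤ nuK k G' + VH.ncard := by
    obtain ⟨M, hM1, hM2, hMcard⟩ := exists_max_matching (G := G) hk
    rw [← hMcard]
    set MA := M.filter (fun S => ∃ x ∈ S, x ∈ VH) with hMAdef
    set MB := M.filter (fun S => ¬∃ x ∈ S, x ∈ VH) with hMBdef
    have hsplit : MA.card + MB.card = M.card :=
      Finset.card_filter_add_card_filter_not _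
    have hA : MA.card ≤ VH.ncard := by
      have hex : ∀ S : {S // S ∈ MA}, ∃ x, x ∈ S.1 ∧ x ∈ VH := by
        rintro ⟨S, hS⟩
        obtain ⟨x, hx1, hx2⟩ := (Finset.mem_filter.mp hS).2
        exact ⟨x, hx1, hx2⟩
      choose repA hrep1 hrep2 using hex
      have hinjA : Set.InjOn repA ↑(MA.attach) := by
        rintro ⟨S, hS⟩ _ ⟨S', hS'⟩ _ hEq
        ext1
        by_contra hne
        have hdj := hM2 (Finset.mem_coe.mpr (Finset.mem_of_mem_filter _ hS))
          (Finset.mem_coe.mpr (Finset.mem_of_mem_filter _ hS')) hne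
        exact Set.disjoint_left.mp hdj (hrep1 ⟨S, hS⟩) (hEq ▸ hrep1 ⟨S', hS'⟩)
      calc MA.card = MA.attach.card := (Finset.card_attach).symm
        _ ≤ VH.toFinset.card := Finset.card_le_card_of_injOn repA
            (fun S _ => Set.mem_toFinset.mpr (hrep2 S)) hinjA
        _ = VH.ncard := (Set.ncard_eq_toFinset_card' VH).symm
    have hBle : MB.card ≤ nuK k G' := by
      have hMBsub : ∀ S ∈ MB, S ⊆ VHᶜ := by
        intro S hS x hx
        exact fun hxVH => (Finset.mem_filter.mp hS).2 ⟨x, hx, hxVH⟩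
      have hMBps : ∀ S ∈ MB, IsPathSupport k G' (Subtype.val ⁻¹' S) ∧
          Subtype.val '' (Subtype.val ⁻¹' S : Set ↥(VHᶜ)) = S := by
        intro S hS
        obtain ⟨T, hT1, hT2⟩ := isPathSupport_of_subset
          (hM1 S (Finset.mem_of_mem_filter _ hS)) (hMBsub S hS)
        have : (Subtype.val ⁻¹' S : Set ↥(VHᶜ)) = T := by
          rw [← hT1]; exact Set.preimage_image_eq _ Subtype.coe_injective
        rw [this, hT1]
        exact ⟨hT2, rfl⟩
      set MB' : Finset (Set ↥(VHᶜ)) := MB.image (fun S => Subtype.val ⁻¹' S) with hMB'def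
      have hcardB : MB'.card = MB.card := by
        rw [hMB'def]
        apply Finset.card_image_of_injOn
        intro S hS S' hS' hEq
        simp only at hEq
        rw [← (hMBps S (Finset.mem_coe.mp hS)).2, ← (hMBps S' (Finset.mem_coe.mp hS')).2, hEq]
      have hvalidB : ∀ T ∈ MB', IsPathSupport k G' T := by
        intro T hT
        obtain ⟨S, hS, rfl⟩ := Finset.mem_image.mp hT
        exact (hMBps S hS).1
      have hpwB : (↑MB' : Set (Set ↥(VHᶜ))).Pairwise Disjoint := by
        intro A hA B hB hne
        obtain ⟨S, hS, rfl⟩ := Finset.mem_image.mp (Finset.mem_coe.mp hA)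
        obtain ⟨S', hS', rfl⟩ := Finset.mem_image.mp (Finset.mem_coe.mp hB)
        have hSS' : S ≠ S' := fun h => hne (by rw [h])
        exact Disjoint.preimage _ (hM2 (Finset.mem_coe.mpr (Finset.mem_of_mem_filter _ hS))
          (Finset.mem_coe.mpr (Finset.mem_of_mem_filter _ hS')) hSS')
      have := le_nuK hk MB' hvalidB hpwB
      omega
    omega
  have htau_le : tauK k G ≤ tauK k G' + VH.ncard := by
    obtain ⟨X₀, hX₀cov, hX₀card⟩ := exists_min_cover (G := G') hk
    set X : Finset V := X₀.image Subtype.val ∪ VH.toFinset with hXdef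
    have hcov : IsKVertexCover k G X := by
      intro S hS
      by_cases hSVH : ∃ x ∈ S, x ∈ VH
      · obtain ⟨x, hx1, hx2⟩ := hSVH
        exact ⟨x, Finset.mem_union_right _ (Set.mem_toFinset.mpr hx2), hx1⟩
      · have hsub : S ⊆ VHᶜ := fun x hx hxVH => hSVH ⟨x, hx, hxVH⟩
        obtain ⟨T, hT1, hT2⟩ := isPathSupport_of_subset hS hsub
        obtain ⟨y, hy1, hy2⟩ := hX₀cov T hT2
        refine ⟨↑y, Finset.mem_union_left _ (Finset.mem_image_of_mem _ hy1), ?_⟩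
        rw [← hT1]
        exact ⟨y, hy2, rfl⟩
    calc tauK k G ≤ X.card := tauK_le X hcov
      _ ≤ (X₀.image Subtype.val).card + VH.toFinset.card := Finset.card_union_le _ _
      _ ≤ X₀.card + VH.toFinset.card := by
          have := Finset.card_image_le (s := X₀) (f := Subtype.val)
          omega
      _ = tauK k G' + VH.ncard := by
          rw [hX₀card, Set.ncard_eq_toFinset_card' VH]
  have htau_ge : tauK k G' + VH.ncard ≤ tauK k G := by
    obtain ⟨X, hXcov, hXcard⟩ := exists_min_cover (G := G) hk
    rw [← hXcard]
    set X₁ := X.filter (fun x => x ∈ VB) with hX₁def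
    set X₂ := X.filter (fun x => x ∉ VB) with hX₂def
    have hsplit : X₁.card + X₂.card = X.card :=
      Finset.card_filter_add_card_filter_not _
    have h1 : VH.ncard ≤ X₁.card := by
      have hex : ∀ v : ↥VH, ∃ x, x ∈ X ∧ x ∈ P v := fun v => by
        obtain ⟨x, hx1, hx2⟩ := hXcov (P v) (hPsupp v)
        exact ⟨x, hx1, hx2⟩
      choose rep hrep1 hrep2 using hex
      have hmem : ∀ v ∈ (Finset.univ : Finset ↥VH), rep v ∈ X₁ := by
        intro v _
        refine Finset.mem_filter.mpr ⟨hrep1 v, ?_⟩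
        rcases hPmem v _ (hrep2 v) with h | h
        · rw [h]; exact hVHB v.2
        · exact h.1
      have hinj : Set.InjOn rep ↑(Finset.univ : Finset ↥VH) := by
        intro v _ v' _ hEq
        by_contra hne
        exact Set.disjoint_left.mp (hPdisj v v' hne) (hrep2 v) (hEq ▸ hrep2 v')
      calc VH.ncard = (Finset.univ : Finset ↥VH).card := hcard.symm
        _ ≤ X₁.card := Finset.card_le_card_of_injOn rep hmem hinj
    have h2 : tauK k G' ≤ X₂.card := by
      set Y : Finset ↥(VHᶜ) := Finset.univ.filter (fun y => ↑y ∈ X₂) with hYdef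
      have hcovY : IsKVertexCover k G' Y := by
        intro T hT
        obtain ⟨x, hx1, hx2⟩ := hXcov (Subtype.val '' T) (isPathSupport_image hT)
        obtain ⟨y, hyT, rfl⟩ := hx2
        have hyVB : (↑y : V) ∉ VB := by
          intro hyB
          exact hNoB T hT y hyT ⟨hyB, y.2⟩
        exact ⟨y, Finset.mem_filter.mpr ⟨Finset.mem_univ _,
          Finset.mem_filter.mpr ⟨hx1, hyVB⟩⟩, hyT⟩
      have hYX₂ : Y.card ≤ X₂.card := by
        apply Finset.card_le_card_of_injOn Subtype.val
        · intro y hy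
          exact (Finset.mem_filter.mp hy).2
        · intro y _ y' _ hEq
          exact Subtype.coe_injective hEq
      exact le_trans (tauK_le Y hcovY) hYX₂
    omega
  exact ⟨le_antisymm hnu_le hnu_ge, le_antisymm htau_le htau_ge⟩
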